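/- Let Z evolve by the SDE system dZ_{1,1} = dW_1, and for k = 2,…,N: dZ_{k,i} = dZ_{k-1,i} + (e^{Z_{k,i+1}−Z_{k-1,i}} − e^{Z_{k,i}−Z_{k-1,i-1}}) dt for 1 ≤ i ≤ k−1 (with the absent exponential terms omitted at the boundary i = 1), and dZ_{k,k} = dW_k − e^{Z_{k,k}−Z_{k-1,k-1}} dt. Then, setting Z_{k,i} = (Π_k W)_i, the triangular process (Z_{k,i})_{1≤i≤k≤N} driven by an N-dimensional standard Brownian motion W solves this system, where Π_1 = Id and Π_k = T_1∘···∘T_{k-1}∘Π_{k-1}. -/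

import Mathlib

noncomputable section
open MeasureTheory ProbabilityTheory Real Set

/-- `B` is a standard one-dimensional Brownian motion. -/
def IsStdBM {Ω : Type*} [MeasureSpace Ω] (B : ℝ → Ω → ℝ) : Prop :=
  (∀ ω, B 0 ω = 0) ∧
  (∀ ω, Continuous fun t => B t ω) ∧
  (∀ t, Measurable (B t)) ∧
  (∀ s t : ℝ, 0 ≤ s → s ≤ t →
    Measure.map (fun ω => B t ω - B s ω) ℙ = gaussianReal 0 (Real.toNNReal (t - s))) ∧
  (∀ (n : ℕ) (u : ℕ → ℝ), Monotone u → (∀ i, 0 ≤ u i) →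
    iIndepFun
      (fun i : Fin n => fun ω => B (u (i + 1)) ω - B (u i) ω) ℙ)

/-- A family of independent standard one-dimensional Brownian motions. -/
def IsBMFamily {Ω : Type*} [MeasureSpace Ω] (B : ℕ → ℝ → Ω → ℝ) : Prop :=
  (∀ i, IsStdBM (B i)) ∧
  iIndepFun (fun (i : ℕ) (ω : Ω) => fun t : ℝ => B i t ω) ℙ

/-- The path transform `T_i` (coordinates indexed from `0`). -/
def Ttrans (i : ℕ) (η : ℝ → ℕ → ℝ) : ℝ → ℕ → ℝ :=
  fun t j => η t j +
    Real.log (∫ s in Set.Ioc (0 : ℝ) t, Real.exp (η s (i + 1) - η s i)) *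
      ((if j = i then (1 : ℝ) else 0) - (if j = i + 1 then (1 : ℝ) else 0))

/-- `blockOp k = T_0 ∘ T_1 ∘ ⋯ ∘ T_{k-1}`. -/
def blockOp (k : ℕ) : (ℝ → ℕ → ℝ) → (ℝ → ℕ → ℝ) :=
  (List.range k).foldr (fun i f => Ttrans i ∘ f) id

/-- `PiOp k` is the operator `Π_k`:  `Π_1 = Id`, `Π_{k+1} = (T_1 ∘ ⋯ ∘ T_k) ∘ Π_k`. -/
def PiOp : ℕ → (ℝ → ℕ → ℝ) → (ℝ → ℕ → ℝ)
  | 0 => id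
  | (k + 1) => blockOp k ∘ PiOp k

/-- The triangular array `Z_{k,i} = (Π_k W)_i` (row `k` has entries `i = 0, …, k-1`; in the
1-indexed notation of the paper, `Z k i` here is `Z_{k,i+1}`). -/
def Ztri (W : ℝ → ℕ → ℝ) (k i : ℕ) (t : ℝ) : ℝ := PiOp k W t i

namespace OC


lemma Ttrans_self (i : ℕ) (η : ℝ → ℕ → ℝ) (t : ℝ) :
    Ttrans i η t i = η t i +
      Real.log (∫ s in Set.Ioc (0 : ℝ) t, Real.exp (η s (i + 1) - η s i)) := by
  simp [Ttrans]

lemma Ttrans_succ (i : ℕ) (η : ℝ → ℕ → ℝ) (t : ℝ) :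
    Ttrans i η t (i+1) = η t (i+1) -
      Real.log (∫ s in Set.Ioc (0 : ℝ) t, Real.exp (η s (i + 1) - η s i)) := by
  simp [Ttrans]
  ring

lemma Ttrans_other (i m : ℕ) (h1 : m ≠ i) (h2 : m ≠ i + 1) (η : ℝ → ℕ → ℝ) (t : ℝ) :
    Ttrans i η t m = η t m := by
  simp [Ttrans, h1, h2]

def bl : ℕ → ℕ → (ℝ → ℕ → ℝ) → (ℝ → ℕ → ℝ)
  | 0, _ => id
  | (n+1), j => Ttrans j ∘ bl n (j+1)

lemma bl_succ_right (n j : ℕ) : bl (n+1) j = bl n j ∘ Ttrans (j+n) := by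
  induction n generalizing j with
  | zero => simp [bl]
  | succ n ih =>
      show Ttrans j ∘ bl (n+1) (j+1) = _
      rw [ih]
      show Ttrans j ∘ (bl n (j+1) ∘ Ttrans (j+1+n)) = (Ttrans j ∘ bl n (j+1)) ∘ Ttrans (j+(n+1))
      rw [Function.comp_assoc]
      have : j + 1 + n = j + (n + 1) := by omega
      rw [this]

lemma foldr_comp (l : List ℕ) (g : (ℝ → ℕ → ℝ) → (ℝ → ℕ → ℝ)) :
    l.foldr (fun i f => Ttrans i ∘ f) g = l.foldr (fun i f => Ttrans i ∘ f) id ∘ g := by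
  induction l with
  | nil => rfl
  | cons a l ih => simp only [List.foldr_cons, ih]; rfl

lemma blockOp_eq_bl (k : ℕ) : blockOp k = bl k 0 := by
  induction k with
  | zero => rfl
  | succ k ih =>
      unfold blockOp
      rw [List.range_succ, List.foldr_append]
      show (List.range k).foldr (fun i f => Ttrans i ∘ f) (Ttrans k ∘ id) = _
      rw [foldr_comp]
      have h1 : (List.range k).foldr (fun i f => Ttrans i ∘ f) id = blockOp k := rfl
      rw [h1, ih, bl_succ_right]
      simp

def Afun (η : ℝ → ℕ → ℝ) (k : ℕ) (j : ℕ) : ℝ → ℝ :=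
  fun t => ∫ s in Ioc (0:ℝ) t,
    Real.exp ((if _ : j + 1 < k then η s (j+1) + Real.log (Afun η k (j+1) s) else η s (j+1)) - η s j)
  termination_by k - j
  decreasing_by omega

lemma Afun_def (η : ℝ → ℕ → ℝ) (k j : ℕ) (t : ℝ) :
    Afun η k j t = ∫ s in Ioc (0:ℝ) t,
      Real.exp ((if _ : j + 1 < k then η s (j+1) + Real.log (Afun η k (j+1) s) else η s (j+1)) - η s j) := by
  rw [Afun]

lemma Afun_top (η : ℝ → ℕ → ℝ) (k j : ℕ) (hj : ¬ (j + 1 < k)) (t : ℝ) :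
    Afun η k j t = ∫ s in Ioc (0:ℝ) t, Real.exp (η s (j+1) - η s j) := by
  rw [Afun_def]
  congr 1
  ext s
  rw [dif_neg hj]

lemma Afun_mid (η : ℝ → ℕ → ℝ) (k j : ℕ) (hj : j + 1 < k) (t : ℝ) :
    Afun η k j t = ∫ s in Ioc (0:ℝ) t,
      Real.exp (η s (j+1) + Real.log (Afun η k (j+1) s) - η s j) := by
  rw [Afun_def]
  congr 1
  ext s
  rw [dif_pos hj]

lemma bl_apply (η : ℝ → ℕ → ℝ) (k : ℕ) :
    ∀ (d j : ℕ), j + d + 1 = k → ∀ t m, bl (d+1) j η t m =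
      if m < j ∨ k < m then η t m
      else if m = j then η t j + Real.log (Afun η k j t)
      else if m = k then η t k - Real.log (Afun η k (k-1) t)
      else η t m + Real.log (Afun η k m t) - Real.log (Afun η k (m-1) t) := by
  intro d
  induction d with
  | zero =>
      intro j hj t m
      have hjk : j + 1 = k := by omega
      show Ttrans j (bl 0 (j+1) η) t m = _
      have hbl : bl 0 (j+1) η = η := rfl
      rw [hbl]
      have hA : (∫ s in Set.Ioc (0:ℝ) t, Real.exp (η s (j + 1) - η s j)) = Afun η k j t :=
        (Afun_top η k j (by omega) t).symm
      rcases lt_trichotomy m j with h | h | h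
      · rw [Ttrans_other j m (by omega) (by omega), if_pos (Or.inl h)]
      · rw [h, Ttrans_self, hA, if_neg (by omega), if_pos rfl]
      · rcases eq_or_lt_of_le (Nat.succ_le_of_lt h) with h2 | h2
        · rw [← h2, Ttrans_succ, hA, if_neg (by omega), if_neg (by omega), if_pos (by omega)]
          have h3 : k - 1 = j := by omega
          rw [h3, hjk]
        · rw [Ttrans_other j m (by omega) (by omega), if_pos (Or.inr (by omega))]
  | succ d ih =>
      intro j hj t m
      have hjk : j + 1 < k := by omega
      have hIH := ih (j+1) (by omega)
      show Ttrans j (bl (d+1) (j+1) η) t m = _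
      have hξj : ∀ s, bl (d+1) (j+1) η s j = η s j := by
        intro s; rw [hIH s j, if_pos (Or.inl (by omega))]
      have hξj1 : ∀ s, bl (d+1) (j+1) η s (j+1) = η s (j+1) + Real.log (Afun η k (j+1) s) := by
        intro s
        rw [hIH s (j+1), if_neg (by omega), if_pos rfl]
      have hA : (∫ s in Set.Ioc (0:ℝ) t,
          Real.exp (bl (d+1) (j+1) η s (j + 1) - bl (d+1) (j+1) η s j)) = Afun η k j t := by
        rw [Afun_mid η k j hjk]
        congr 1
        ext s
        rw [hξj, hξj1]
      rcases lt_trichotomy m j with h | h | h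
      · rw [Ttrans_other j m (by omega) (by omega), hIH t m,
          if_pos (Or.inl (by omega)), if_pos (Or.inl h)]
      · rw [h, Ttrans_self, hA, hξj, if_neg (by omega), if_pos rfl]
      · rcases eq_or_lt_of_le (Nat.succ_le_of_lt h) with h2 | h2
        · rw [← h2, Ttrans_succ, hA, hξj1, if_neg (by omega), if_neg (by omega),
            if_neg (by omega)]
          simp
        · rw [Ttrans_other j m (by omega) (by omega), hIH t m]
          rcases Nat.lt_or_ge k m with h3 | h3
          · rw [if_pos (Or.inr h3), if_pos (Or.inr h3)]
          · rcases eq_or_ne m k with h4 | h4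
            · rw [if_neg (by omega), if_neg (by omega), if_pos h4,
                if_neg (by omega), if_neg (by omega)]
            · rw [if_neg (by omega), if_neg (by omega), if_neg h4,
                if_neg (by omega), if_neg (by omega)]

lemma blockOp_apply (η : ℝ → ℕ → ℝ) (k : ℕ) (hk : 1 ≤ k) (t : ℝ) (m : ℕ) :
    blockOp k η t m =
      if k < m then η t m
      else if m = 0 then η t 0 + Real.log (Afun η k 0 t)
      else if m = k then η t k - Real.log (Afun η k (k-1) t)
      else η t m + Real.log (Afun η k m t) - Real.log (Afun η k (m-1) t) := by
  obtain ⟨d, rfl⟩ : ∃ d, k = d + 1 := ⟨k - 1, by omega⟩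
  rw [blockOp_eq_bl]
  rw [bl_apply η (d+1) d 0 (by omega) t m]
  rcases eq_or_ne m 0 with rfl | h0
  · simp
  · rcases Nat.lt_or_ge (d+1) m with h | h
    · rw [if_pos (Or.inr h), if_pos h]
    · rw [if_neg (by omega : ¬ (m < 0 ∨ d + 1 < m)), if_neg h0, if_neg (by omega : ¬ (d + 1 < m))]

lemma blockOp_gt (η : ℝ → ℕ → ℝ) (k : ℕ) (hk : 1 ≤ k) (t : ℝ) (m : ℕ) (h : k < m) :
    blockOp k η t m = η t m := by
  rw [blockOp_apply η k hk t m, if_pos h]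



/-- exponent of the two-sided power bound for `exp (η (j+1) - η j)` in row `k` -/
def pexp (k j : ℕ) : ℤ := if j + 1 < k then -2 else if j + 1 = k then (k:ℤ) - 1 else 0

/-- two-sided power bound on `(0,1]` -/
def PB (f : ℝ → ℝ) (p : ℤ) : Prop :=
  ∃ C : ℝ, 0 < C ∧ ∀ t ∈ Ioc (0:ℝ) 1, C⁻¹ * t ^ p ≤ f t ∧ f t ≤ C * t ^ p

lemma PB.pos {f : ℝ → ℝ} {p : ℤ} (hf : PB f p) {t : ℝ} (ht : t ∈ Ioc (0:ℝ) 1) : 0 < f t := by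
  obtain ⟨C, hC, h⟩ := hf
  have h1 := (h t ht).1
  have : (0:ℝ) < C⁻¹ * t ^ p := by
    have := zpow_pos ht.1 p
    positivity
  linarith

lemma PB.mul {f g : ℝ → ℝ} {p q : ℤ} (hf : PB f p) (hg : PB g q) :
    PB (fun t => f t * g t) (p + q) := by
  obtain ⟨C, hC, hCf⟩ := hf
  obtain ⟨D, hD, hDg⟩ := hg
  refine ⟨C * D, by positivity, fun t ht => ?_⟩
  have ht0 : (0:ℝ) < t := ht.1
  obtain ⟨hf1, hf2⟩ := hCf t ht
  obtain ⟨hg1, hg2⟩ := hDg t ht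
  have htp : (0:ℝ) < t ^ p := zpow_pos ht0 p
  have htq : (0:ℝ) < t ^ q := zpow_pos ht0 q
  have hfpos : 0 < f t := lt_of_lt_of_le (by positivity) hf1
  have hgpos : 0 < g t := lt_of_lt_of_le (by positivity) hg1
  constructor
  · rw [zpow_add₀ (ne_of_gt ht0)]
    calc (C*D)⁻¹ * (t^p * t^q) = (C⁻¹ * t^p) * (D⁻¹ * t^q) := by rw [mul_inv]; ring
    _ ≤ f t * g t := mul_le_mul hf1 hg1 (by positivity) (le_of_lt hfpos)
  · rw [zpow_add₀ (ne_of_gt ht0)]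
    calc f t * g t ≤ (C * t^p) * (D * t^q) :=
          mul_le_mul hf2 hg2 (le_of_lt hgpos) (by positivity)
    _ = C * D * (t^p * t^q) := by ring

lemma PB.inv {f : ℝ → ℝ} {p : ℤ} (hf : PB f p) : PB (fun t => (f t)⁻¹) (-p) := by
  obtain ⟨C, hC, hCf⟩ := hf
  refine ⟨C, hC, fun t ht => ?_⟩
  have ht0 : (0:ℝ) < t := ht.1
  obtain ⟨hf1, hf2⟩ := hCf t ht
  have htp : (0:ℝ) < t ^ p := zpow_pos ht0 p
  have hfpos : 0 < f t := lt_of_lt_of_le (by positivity) hf1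
  have hnp : t ^ (-p) = (t ^ p)⁻¹ := zpow_neg t p
  constructor
  · show C⁻¹ * t ^ (-p) ≤ (f t)⁻¹
    rw [hnp]
    have h2 : C⁻¹ * (t ^ p)⁻¹ = (C * t ^ p)⁻¹ := by rw [mul_inv]
    rw [h2]
    exact inv_anti₀ hfpos hf2
  · show (f t)⁻¹ ≤ C * t ^ (-p)
    rw [hnp]
    have := inv_anti₀ (by positivity : (0:ℝ) < C⁻¹ * t ^ p) hf1
    calc (f t)⁻¹ ≤ (C⁻¹ * t ^ p)⁻¹ := this
    _ = C * (t ^ p)⁻¹ := by rw [mul_inv, inv_inv]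

lemma PB.congr {f g : ℝ → ℝ} {p : ℤ} (hf : PB f p)
    (he : ∀ t ∈ Ioc (0:ℝ) 1, f t = g t) : PB g p := by
  obtain ⟨C, hC, hCf⟩ := hf
  exact ⟨C, hC, fun t ht => (he t ht) ▸ hCf t ht⟩

lemma PB.cast {f : ℝ → ℝ} {p q : ℤ} (hf : PB f p) (h : p = q) : PB f q := h ▸ hf

lemma PB_exp_of_continuous {f : ℝ → ℝ} (hf : Continuous f) :
    PB (fun t => Real.exp (f t)) 0 := by
  obtain ⟨M, hM⟩ := (isCompact_Icc (a := (0:ℝ)) (b := 1)).exists_bound_of_continuousOn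
    hf.continuousOn
  refine ⟨Real.exp M, Real.exp_pos M, fun t ht => ?_⟩
  have ht' : t ∈ Icc (0:ℝ) 1 := ⟨le_of_lt ht.1, ht.2⟩
  have h1 : |f t| ≤ M := hM t ht'
  rw [abs_le] at h1
  simp only [zpow_zero, mul_one]
  constructor
  · rw [← Real.exp_neg]
    exact Real.exp_le_exp.2 (by linarith [h1.1])
  · exact Real.exp_le_exp.2 h1.2

/-- the integrand defining `Afun η k j` -/
def gfun (η : ℝ → ℕ → ℝ) (k j : ℕ) : ℝ → ℝ := fun s =>
  Real.exp ((if _ : j + 1 < k then η s (j+1) + Real.log (Afun η k (j+1) s) else η s (j+1)) - η s j)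

lemma gfun_pos (η : ℝ → ℕ → ℝ) (k j : ℕ) (s : ℝ) : 0 < gfun η k j s := Real.exp_pos _

lemma Afun_eq_int (η : ℝ → ℕ → ℝ) (k j : ℕ) (t : ℝ) :
    Afun η k j t = ∫ s in Ioc (0:ℝ) t, gfun η k j s := Afun_def η k j t

/-- nat-power form of PB -/
lemma PB.nat_bounds {f : ℝ → ℝ} {n : ℕ} (hf : PB f (n : ℤ)) :
    ∃ C : ℝ, 0 < C ∧ ∀ t ∈ Ioc (0:ℝ) 1, C⁻¹ * t ^ n ≤ f t ∧ f t ≤ C * t ^ n := by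
  obtain ⟨C, hC, h⟩ := hf
  refine ⟨C, hC, fun t ht => ?_⟩
  have := h t ht
  rwa [zpow_natCast] at this

/-- integrability on `Ioc 0 t` from a power bound and continuity on `Ioi 0`. -/
lemma integrableOn_Ioc_of_PB {f : ℝ → ℝ} {n : ℕ} (hpos : ∀ s, 0 < f s)
    (hcont : ContinuousOn f (Ioi 0)) (hpb : PB f (n : ℤ)) (t : ℝ) :
    IntegrableOn f (Ioc 0 t) := by
  obtain ⟨C, hC, hb⟩ := hpb.nat_bounds
  have key : ∀ u : ℝ, u ≤ 1 → IntegrableOn f (Ioc 0 u) := by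
    intro u hu
    have hmeas : AEStronglyMeasurable f (volume.restrict (Ioc (0:ℝ) u)) :=
      (hcont.mono (fun x hx => hx.1)).aestronglyMeasurable measurableSet_Ioc
    refine Integrable.mono' (g := fun s => C * s ^ n) ?_ hmeas ?_
    · exact (continuous_const.mul (continuous_pow n)).integrableOn_Ioc
    · rw [ae_restrict_iff' measurableSet_Ioc]
      filter_upwards with s hs
      rw [Real.norm_eq_abs, abs_of_pos (hpos s)]
      exact (hb s ⟨hs.1, le_trans hs.2 hu⟩).2
  rcases le_or_gt t 1 with h | h
  · exact key t h
  · have h1 : Ioc (0:ℝ) t = Ioc 0 1 ∪ Ioc 1 t := (Ioc_union_Ioc_eq_Ioc zero_le_one h.le).symm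
    rw [h1]
    refine (key 1 le_rfl).union ?_
    have : IntegrableOn f (Icc (1:ℝ) t) :=
      (hcont.mono (fun x hx => lt_of_lt_of_le zero_lt_one hx.1)).integrableOn_Icc
    exact this.mono_set Ioc_subset_Icc_self

/-- good properties of the `A`-function at one index -/
structure AGood (η : ℝ → ℕ → ℝ) (k j : ℕ) : Prop where
  gcont : ContinuousOn (gfun η k j) (Ioi 0)
  gint : ∀ t, IntegrableOn (gfun η k j) (Ioc 0 t)
  gpb : PB (gfun η k j) (j : ℤ)
  apb : PB (Afun η k j) ((j : ℤ) + 1)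
  apos : ∀ t, 0 < t → 0 < Afun η k j t
  acont : ∀ t, 0 < t → ContinuousAt (Afun η k j) t
  aderiv : ∀ t, 0 < t → HasDerivAt (Afun η k j) (gfun η k j t) t

lemma apb_of_g {η : ℝ → ℕ → ℝ} {k j : ℕ}
    (hgpb : PB (gfun η k j) (j : ℤ)) (hgint : ∀ t, IntegrableOn (gfun η k j) (Ioc 0 t)) :
    PB (Afun η k j) ((j : ℤ) + 1) := by
  obtain ⟨C, hC, hb⟩ := hgpb.nat_bounds
  refine ⟨C * (j + 1), by positivity, fun t ht => ?_⟩
  have ht0 : (0:ℝ) < t := ht.1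
  have hmono : ∫ s in Ioc (0:ℝ) t, s ^ j = t ^ (j+1) / (j+1) := by
    rw [← intervalIntegral.integral_of_le ht0.le, integral_pow]
    norm_num
  have hintpow : IntegrableOn (fun s : ℝ => s ^ j) (Ioc 0 t) := (continuous_pow j).integrableOn_Ioc
  have hzp : t ^ ((j : ℤ) + 1) = t ^ (j + 1) := by
    rw [show (j : ℤ) + 1 = ((j + 1 : ℕ) : ℤ) by push_cast; ring, zpow_natCast]
  constructor
  · have hlow : (∫ s in Ioc (0:ℝ) t, C⁻¹ * s ^ j) ≤ Afun η k j t := by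
      rw [Afun_eq_int]
      refine setIntegral_mono_on (hintpow.const_mul _) (hgint t) measurableSet_Ioc ?_
      intro s hs
      exact (hb s ⟨hs.1, le_trans hs.2 ht.2⟩).1
    rw [integral_const_mul, hmono] at hlow
    rw [hzp]
    calc (C * (j+1))⁻¹ * t ^ (j+1) = C⁻¹ * (t ^ (j+1) / (j+1)) := by
          rw [mul_inv, div_eq_mul_inv]; ring
    _ ≤ Afun η k j t := hlow
  · have hup : Afun η k j t ≤ ∫ s in Ioc (0:ℝ) t, C * s ^ j := by
      rw [Afun_eq_int]
      refine setIntegral_mono_on (hgint t) (hintpow.const_mul _) measurableSet_Ioc ?_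
      intro s hs
      exact (hb s ⟨hs.1, le_trans hs.2 ht.2⟩).2
    rw [integral_const_mul, hmono] at hup
    rw [hzp]
    calc Afun η k j t ≤ C * (t ^ (j+1) / (j+1)) := hup
    _ ≤ C * (((j:ℝ)+1) * t ^ (j+1)) := by
        refine mul_le_mul_of_nonneg_left ?_ hC.le
        rw [div_le_iff₀ (by positivity : (0:ℝ) < (j:ℝ)+1)]
        nlinarith [pow_pos ht0 (j+1), Nat.cast_nonneg (α := ℝ) j,
          mul_nonneg (mul_nonneg (Nat.cast_nonneg (α := ℝ) j) (Nat.cast_nonneg (α := ℝ) j))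
            (pow_pos ht0 (j+1)).le,
          mul_nonneg (Nat.cast_nonneg (α := ℝ) j) (pow_pos ht0 (j+1)).le]
    _ = C * (j+1) * t ^ (j+1) := by ring

lemma apos_of {η : ℝ → ℕ → ℝ} {k j : ℕ}
    (hgint : ∀ t, IntegrableOn (gfun η k j) (Ioc 0 t))
    (hapb : PB (Afun η k j) ((j : ℤ) + 1)) :
    ∀ t, 0 < t → 0 < Afun η k j t := by
  intro t ht
  set t' := min t 1 with ht'
  have ht'0 : 0 < t' := lt_min ht zero_lt_one
  have ht'1 : t' ∈ Ioc (0:ℝ) 1 := ⟨ht'0, min_le_right _ _⟩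
  have h1 : 0 < Afun η k j t' := by
    obtain ⟨C, hC, hb⟩ := hapb
    have := (hb t' ht'1).1
    have hz : (0:ℝ) < t' ^ ((j:ℤ)+1) := zpow_pos ht'0 _
    have : (0:ℝ) < C⁻¹ * t' ^ ((j:ℤ)+1) := by positivity
    linarith [(hb t' ht'1).1]
  have h2 : Afun η k j t' ≤ Afun η k j t := by
    rw [Afun_eq_int, Afun_eq_int]
    refine setIntegral_mono_set (hgint t) ?_ ?_
    · filter_upwards with s using le_of_lt (gfun_pos η k j s)
    · have : Ioc (0:ℝ) t' ⊆ Ioc 0 t := Ioc_subset_Ioc le_rfl (min_le_left _ _)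
      exact HasSubset.Subset.eventuallyLE this
  linarith

lemma acont_of {η : ℝ → ℕ → ℝ} {k j : ℕ}
    (hgint : ∀ t, IntegrableOn (gfun η k j) (Ioc 0 t)) :
    ∀ t, 0 < t → ContinuousAt (Afun η k j) t := by
  intro t ht
  have hint : IntegrableOn (gfun η k j) (Icc 0 (t+1)) := by
    rw [integrableOn_Icc_iff_integrableOn_Ioc]
    exact hgint (t+1)
  have hc := intervalIntegral.continuousOn_primitive (f := gfun η k j) (a := 0) (b := t+1) (μ := volume) hint
  have heq : ∀ x, (∫ s in Ioc (0:ℝ) x, gfun η k j s) = Afun η k j x :=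
    fun x => (Afun_eq_int η k j x).symm
  rw [funext heq] at hc
  exact hc.continuousAt (Icc_mem_nhds (by linarith) (by linarith))

lemma aderiv_of {η : ℝ → ℕ → ℝ} {k j : ℕ}
    (hgcont : ContinuousOn (gfun η k j) (Ioi 0))
    (hgint : ∀ t, IntegrableOn (gfun η k j) (Ioc 0 t)) :
    ∀ t, 0 < t → HasDerivAt (Afun η k j) (gfun η k j t) t := by
  intro t ht
  have hii : IntervalIntegrable (gfun η k j) volume 0 t := by
    rw [intervalIntegrable_iff_integrableOn_Ioc_of_le ht.le]
    exact hgint t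
  have hmeas : StronglyMeasurableAtFilter (gfun η k j) (nhds t) :=
    hgcont.stronglyMeasurableAtFilter isOpen_Ioi t ht
  have hca : ContinuousAt (gfun η k j) t := hgcont.continuousAt (Ioi_mem_nhds ht)
  have h := intervalIntegral.integral_hasDerivAt_right hii hmeas hca
  refine h.congr_of_eventuallyEq ?_
  filter_upwards [Ioi_mem_nhds ht] with u hu
  rw [Afun_eq_int, intervalIntegral.integral_of_le (le_of_lt hu)]


lemma gfun_top {η : ℝ → ℕ → ℝ} {k j : ℕ} (h : ¬ (j+1 < k)) :
    gfun η k j = fun s => Real.exp (η s (j+1) - η s j) := by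
  funext s; unfold gfun; rw [dif_neg h]

lemma gfun_mid {η : ℝ → ℕ → ℝ} {k j : ℕ} (h : j+1 < k) :
    gfun η k j = fun s => Real.exp (η s (j+1) + Real.log (Afun η k (j+1) s) - η s j) := by
  funext s; unfold gfun; rw [dif_pos h]

lemma gfun_mid_eq {η : ℝ → ℕ → ℝ} {k j : ℕ} {s : ℝ} (h : j+1 < k)
    (hA : 0 < Afun η k (j+1) s) :
    gfun η k j s = Real.exp (η s (j+1) - η s j) * Afun η k (j+1) s := by
  unfold gfun
  rw [dif_pos h, show η s (j+1) + Real.log (Afun η k (j+1) s) - η s j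
      = (η s (j+1) - η s j) + Real.log (Afun η k (j+1) s) by ring,
    Real.exp_add, Real.exp_log hA]

lemma agood_all {η : ℝ → ℕ → ℝ} {k : ℕ}
    (hη : ∀ i, ContinuousOn (fun t => η t i) (Ioi 0))
    (hbdd : ∀ j, PB (fun t => Real.exp (η t (j+1) - η t j)) (pexp k j)) :
    ∀ d j, j + d + 1 = k → AGood η k j := by
  intro d
  induction d with
  | zero =>
      intro j hj
      have hnot : ¬ (j + 1 < k) := by omega
      have hg : gfun η k j = fun s => Real.exp (η s (j+1) - η s j) := gfun_top hnot
      have gcont : ContinuousOn (gfun η k j) (Ioi 0) := by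
        rw [hg]
        exact Real.continuous_exp.comp_continuousOn ((hη (j+1)).sub (hη j))
      have gpb : PB (gfun η k j) (j:ℤ) := by
        refine ((hbdd j).cast ?_).congr ?_
        · unfold pexp
          rw [if_neg hnot, if_pos (by omega)]
          omega
        · intro t _
          rw [hg]
      have gint := integrableOn_Ioc_of_PB (gfun_pos η k j) gcont gpb
      have apb := apb_of_g gpb gint
      exact ⟨gcont, gint, gpb, apb, apos_of gint apb, acont_of gint, aderiv_of gcont gint⟩
  | succ d ih =>
      intro j hj
      have hjk : j + 1 < k := by omega
      have IH : AGood η k (j+1) := ih (j+1) (by omega)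
      have hgmid : ∀ s, 0 < s →
          gfun η k j s = Real.exp (η s (j+1) - η s j) * Afun η k (j+1) s :=
        fun s hs => gfun_mid_eq hjk (IH.apos s hs)
      have gcont : ContinuousOn (gfun η k j) (Ioi 0) := by
        intro s hs
        have hs' : (0:ℝ) < s := hs
        have h1 : ContinuousAt (fun u => η u (j+1)) s :=
          (hη (j+1)).continuousAt (Ioi_mem_nhds hs')
        have h2 : ContinuousAt (fun u => η u j) s := (hη j).continuousAt (Ioi_mem_nhds hs')
        have h3 : ContinuousAt (fun u => Real.log (Afun η k (j+1) u)) s :=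
          (Real.continuousAt_log (ne_of_gt (IH.apos s hs'))).comp (IH.acont s hs')
        have h4 : ContinuousAt (gfun η k j) s := by
          rw [gfun_mid hjk]
          exact Real.continuous_exp.continuousAt.comp ((h1.add h3).sub h2)
        exact h4.continuousWithinAt
      have gpb : PB (gfun η k j) (j:ℤ) := by
        have hm := (hbdd j).mul IH.apb
        refine (hm.congr ?_).cast ?_
        · intro t ht
          exact (hgmid t ht.1).symm
        · have hp : pexp k j = -2 := by unfold pexp; rw [if_pos hjk]
          rw [hp]
          push_cast
          ring
      have gint := integrableOn_Ioc_of_PB (gfun_pos η k j) gcont gpb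
      have apb := apb_of_g gpb gint
      exact ⟨gcont, gint, gpb, apb, apos_of gint apb, acont_of gint, aderiv_of gcont gint⟩

lemma logA_cont {η : ℝ → ℕ → ℝ} {k j : ℕ} (h : AGood η k j) :
    ContinuousOn (fun t => Real.log (Afun η k j t)) (Ioi 0) := by
  intro s hs
  have hs' : (0:ℝ) < s := hs
  exact ((Real.continuousAt_log (ne_of_gt (h.apos s hs'))).comp (h.acont s hs')).continuousWithinAt

lemma logA_diff {η : ℝ → ℕ → ℝ} {k j : ℕ} (h : AGood η k j) {s t : ℝ}
    (hs : 0 < s) (hst : s < t) :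
    Real.log (Afun η k j t) - Real.log (Afun η k j s) =
      ∫ u in Ioc s t, gfun η k j u / Afun η k j u := by
  have huIcc : uIcc s t = Icc s t := uIcc_of_le hst.le
  have hderiv : ∀ x ∈ uIcc s t,
      HasDerivAt (fun u => Real.log (Afun η k j u)) (gfun η k j x / Afun η k j x) x := by
    intro x hx
    rw [huIcc] at hx
    have hx0 : 0 < x := lt_of_lt_of_le hs hx.1
    exact (h.aderiv x hx0).log (ne_of_gt (h.apos x hx0))
  have hIccIoi : Icc s t ⊆ Ioi 0 := fun x hx => lt_of_lt_of_le hs hx.1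
  have hint : IntervalIntegrable (fun u => gfun η k j u / Afun η k j u) volume s t := by
    apply ContinuousOn.intervalIntegrable
    rw [huIcc]
    apply ContinuousOn.div (h.gcont.mono hIccIoi)
    · intro x hx
      exact ((h.acont x (hIccIoi hx)).continuousWithinAt)
    · intro x hx
      exact ne_of_gt (h.apos x (hIccIoi hx))
  have := intervalIntegral.integral_eq_sub_of_hasDerivAt hderiv hint
  rw [intervalIntegral.integral_of_le hst.le] at this
  linarith [this]

lemma integrand_eq {η : ℝ → ℕ → ℝ} {k j : ℕ} (hk : 1 ≤ k) (hj : j + 1 ≤ k)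
    (h : AGood η k j) {u : ℝ} (hu : 0 < u) :
    Real.exp (blockOp k η u (j+1) - η u j) = gfun η k j u / Afun η k j u := by
  have hA := h.apos u hu
  rcases eq_or_lt_of_le hj with he | hlt
  · rw [blockOp_apply η k hk u (j+1), if_neg (by omega), if_neg (by omega), if_pos he,
      gfun_top (by omega)]
    rw [show η u k - Real.log (Afun η k (k-1) u) - η u j
        = (η u (j+1) - η u j) - Real.log (Afun η k (k-1) u) by
      rw [show k - 1 = j by omega, he]; ring]
    rw [Real.exp_sub, Real.exp_log (by rw [show k - 1 = j by omega]; exact hA),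
      show k - 1 = j by omega]
  · rw [blockOp_apply η k hk u (j+1), if_neg (by omega), if_neg (by omega), if_neg (by omega),
      gfun_mid hlt]
    rw [show η u (j+1) + Real.log (Afun η k (j+1) u) - Real.log (Afun η k (j+1-1) u)
        - η u j = (η u (j+1) + Real.log (Afun η k (j+1) u) - η u j)
          - Real.log (Afun η k j u) by rw [show j + 1 - 1 = j by omega]; ring]
    rw [Real.exp_sub, Real.exp_log hA]

lemma integrand_integrable {η : ℝ → ℕ → ℝ} {k j : ℕ} (h : AGood η k j) {s t : ℝ}
    (hs : 0 < s) :
    IntegrableOn (fun u => gfun η k j u / Afun η k j u) (Ioc s t) := by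
  rcases le_or_gt t s with hts | hst
  · rw [Ioc_eq_empty (by exact not_lt.mpr hts)]
    exact integrableOn_empty
  · have hIccIoi : Icc s t ⊆ Ioi 0 := fun x hx => lt_of_lt_of_le hs hx.1
    have : IntegrableOn (fun u => gfun η k j u / Afun η k j u) (Icc s t) := by
      apply ContinuousOn.integrableOn_Icc
      apply ContinuousOn.div (h.gcont.mono hIccIoi)
      · intro x hx
        exact ((h.acont x (hIccIoi hx)).continuousWithinAt)
      · intro x hx
        exact ne_of_gt (h.apos x (hIccIoi hx))
    exact this.mono_set Ioc_subset_Icc_self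

lemma logA_diff' {η : ℝ → ℕ → ℝ} {k j : ℕ} (hk : 1 ≤ k) (hj : j + 1 ≤ k)
    (h : AGood η k j) {s t : ℝ} (hs : 0 < s) (hst : s < t) :
    Real.log (Afun η k j t) - Real.log (Afun η k j s) =
      ∫ u in Ioc s t, Real.exp (blockOp k η u (j+1) - η u j) := by
  rw [logA_diff h hs hst]
  refine (setIntegral_congr_fun measurableSet_Ioc ?_).symm
  intro u hu
  exact integrand_eq hk hj h (lt_trans hs hu.1)

lemma integrand_integrable' {η : ℝ → ℕ → ℝ} {k j : ℕ} (hk : 1 ≤ k) (hj : j + 1 ≤ k)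
    (h : AGood η k j) {s t : ℝ} (hs : 0 < s) :
    IntegrableOn (fun u => Real.exp (blockOp k η u (j+1) - η u j)) (Ioc s t) := by
  refine (integrand_integrable h hs).congr_fun ?_ measurableSet_Ioc
  intro u hu
  exact (integrand_eq hk hj h (lt_trans hs hu.1)).symm

lemma exp_add_log (x a : ℝ) (ha : 0 < a) : Real.exp (x + Real.log a) = Real.exp x * a := by
  rw [Real.exp_add, Real.exp_log ha]

lemma exp_sub_log (x a : ℝ) (ha : 0 < a) : Real.exp (x - Real.log a) = Real.exp x * a⁻¹ := by
  rw [Real.exp_sub, Real.exp_log ha, div_eq_mul_inv]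

lemma pexp_lt {k j : ℕ} (h : j + 1 < k) : pexp k j = -2 := if_pos h

lemma pexp_eq {k j : ℕ} (h : j + 1 = k) : pexp k j = (k:ℤ) - 1 := by
  unfold pexp
  rw [if_neg (by omega), if_pos h]

lemma pexp_gt {k j : ℕ} (h : k < j + 1) : pexp k j = 0 := by
  unfold pexp
  rw [if_neg (by omega), if_neg (by omega)]

structure Nice (W η : ℝ → ℕ → ℝ) (k : ℕ) : Prop where
  cont : ∀ i, ContinuousOn (fun t => η t i) (Ioi 0)
  eqW : ∀ i, k ≤ i → ∀ t, η t i = W t i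
  bdd : ∀ j, PB (fun t => Real.exp (η t (j+1) - η t j)) (pexp k j)

lemma Nice.ag {W η : ℝ → ℕ → ℝ} {k : ℕ} (hn : Nice W η k) (j : ℕ) (hj : j < k) :
    AGood η k j :=
  agood_all hn.cont hn.bdd (k - 1 - j) j (by omega)

lemma nice_step {W η : ℝ → ℕ → ℝ} {k : ℕ} (hk : 1 ≤ k) (hn : Nice W η k) :
    Nice W (blockOp k η) (k+1) := by
  have hZtop : ∀ t, blockOp k η t k = η t k - Real.log (Afun η k (k-1) t) := by
    intro t
    rw [blockOp_apply η k hk, if_neg (lt_irrefl k), if_neg (by omega), if_pos rfl]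
  have hZ0 : ∀ t, blockOp k η t 0 = η t 0 + Real.log (Afun η k 0 t) := by
    intro t
    rw [blockOp_apply η k hk, if_neg (by omega), if_pos rfl]
  have hZmid : ∀ m, 1 ≤ m → m + 1 ≤ k → ∀ t, blockOp k η t m
      = η t m + Real.log (Afun η k m t) - Real.log (Afun η k (m-1) t) := by
    intro m h1 h2 t
    rw [blockOp_apply η k hk, if_neg (by omega), if_neg (by omega), if_neg (by omega)]
  constructor
  · -- continuity
    intro i
    rcases Nat.lt_or_ge k i with h | h
    · have : (fun t => blockOp k η t i) = fun t => η t i :=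
        funext fun t => blockOp_gt η k hk t i h
      rw [this]
      exact hn.cont i
    · rcases eq_or_ne i 0 with rfl | h0
      · have : (fun t => blockOp k η t 0)
            = fun t => η t 0 + Real.log (Afun η k 0 t) := funext fun t => hZ0 t
        rw [this]
        exact (hn.cont 0).add (logA_cont (hn.ag 0 (by omega)))
      · rcases eq_or_ne i k with hik | hik
        · have : (fun t => blockOp k η t i)
              = fun t => η t k - Real.log (Afun η k (k-1) t) :=
            funext fun t => by rw [hik, hZtop t]
          rw [this]
          exact (hn.cont k).sub (logA_cont (hn.ag (k-1) (by omega)))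
        · have : (fun t => blockOp k η t i)
              = fun t => η t i + Real.log (Afun η k i t) - Real.log (Afun η k (i-1) t) :=
            funext fun t => hZmid i (by omega) (by omega) t
          rw [this]
          exact ((hn.cont i).add (logA_cont (hn.ag i (by omega)))).sub
            (logA_cont (hn.ag (i-1) (by omega)))
  · -- eqW
    intro i hi t
    rw [blockOp_gt η k hk t i (by omega)]
    exact hn.eqW i (by omega) t
  · -- power bounds
    intro j
    rcases Nat.lt_or_ge (k+1) (j+1) with hcase | hcase
    · -- j ≥ k+1 : both coordinates untouched
      refine ((hn.bdd j).cast ?_).congr ?_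
      · rw [pexp_gt (by omega), pexp_gt (by omega)]
      · intro t _
        rw [blockOp_gt η k hk t (j+1) (by omega), blockOp_gt η k hk t j (by omega)]
    · rcases eq_or_lt_of_le hcase with hj | hj
      · -- j = k (new top)
        have hjk : j = k := by omega
        rw [hjk]
        have hg := hn.ag (k-1) (by omega)
        refine (((hn.bdd k).mul hg.apb).cast ?_).congr ?_
        · rw [pexp_gt (by omega), pexp_eq rfl]
          push_cast [Nat.cast_sub hk]
          omega
        · intro t ht
          rw [blockOp_gt η k hk t (k+1) (by omega), hZtop t,
            show η t (k+1) - (η t k - Real.log (Afun η k (k-1) t))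
              = (η t (k+1) - η t k) + Real.log (Afun η k (k-1) t) by ring,
            exp_add_log _ _ (hg.apos t ht.1)]
      · -- j + 1 ≤ k : interior
        have hjle : j + 1 ≤ k := by omega
        rcases eq_or_ne j 0 with rfl | hj0
        · rcases eq_or_lt_of_le (show 1 ≤ k by omega) with hk1 | hk2
          · -- j = 0, k = 1
            have h0 := hn.ag 0 (by omega)
            refine ((((hn.bdd 0).mul h0.apb.inv).mul h0.apb.inv).cast ?_).congr ?_
            · rw [pexp_eq (by omega), pexp_lt (by omega), ← hk1]
              try push_cast
              try omega
            · intro t ht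
              have hA0 := h0.apos t ht.1
              simp only [zero_add]
              rw [hk1, hZtop t, hZ0 t, show k - 1 = 0 by omega,
                show η t k - Real.log (Afun η k 0 t) - (η t 0 + Real.log (Afun η k 0 t))
                  = ((η t k - η t 0) - Real.log (Afun η k 0 t)) - Real.log (Afun η k 0 t)
                  by ring,
                exp_sub_log _ _ hA0, exp_sub_log _ _ hA0]
          · -- j = 0, k ≥ 2
            have h0 := hn.ag 0 (by omega)
            have h1 := hn.ag 1 (by omega)
            refine (((((hn.bdd 0).mul h1.apb).mul h0.apb.inv).mul h0.apb.inv).cast ?_).congr ?_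
            · rw [pexp_lt (by omega), pexp_lt (by omega)]
              try push_cast
              try omega
            · intro t ht
              have hA0 := h0.apos t ht.1
              have hA1 := h1.apos t ht.1
              simp only [zero_add]
              rw [hZmid 1 le_rfl (by omega) t, hZ0 t,
                show η t 1 + Real.log (Afun η k 1 t) - Real.log (Afun η k (1-1) t)
                    - (η t 0 + Real.log (Afun η k 0 t))
                  = ((((η t 1 - η t 0) + Real.log (Afun η k 1 t))
                    - Real.log (Afun η k (1-1) t)) - Real.log (Afun η k 0 t)) by ring,
                show (1:ℕ) - 1 = 0 from rfl,
                exp_sub_log _ _ hA0, exp_sub_log _ _ hA0, exp_add_log _ _ hA1]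
        · -- j ≥ 1
          have hjm := hn.ag (j-1) (by omega)
          have hjj := hn.ag j (by omega)
          rcases eq_or_lt_of_le hjle with hjtop | hjlt
          · -- j+1 = k
            refine (((((hn.bdd j).mul hjj.apb.inv).mul hjj.apb.inv).mul hjm.apb).cast ?_).congr ?_
            · rw [pexp_eq hjtop, pexp_lt (by omega)]
              push_cast [Nat.cast_sub (show 1 ≤ j by omega)]
              omega
            · intro t ht
              have hAj := hjj.apos t ht.1
              have hAm := hjm.apos t ht.1
              rw [hjtop, hZtop t, hZmid j (by omega) (by omega) t,
                show η t k - Real.log (Afun η k (k-1) t)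
                    - (η t j + Real.log (Afun η k j t) - Real.log (Afun η k (j-1) t))
                  = (((η t k - η t j) - Real.log (Afun η k (k-1) t))
                    - Real.log (Afun η k j t)) + Real.log (Afun η k (j-1) t) by ring,
                show k - 1 = j by omega,
                exp_add_log _ _ hAm, exp_sub_log _ _ hAj, exp_sub_log _ _ hAj]
          · -- j+1 < k
            have hjp := hn.ag (j+1) (by omega)
            refine ((((((hn.bdd j).mul hjp.apb).mul hjj.apb.inv).mul hjj.apb.inv).mul hjm.apb).cast ?_).congr ?_
            · rw [pexp_lt hjlt, pexp_lt (by omega)]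
              push_cast [Nat.cast_sub (show 1 ≤ j by omega)]
              omega
            · intro t ht
              have hAj := hjj.apos t ht.1
              have hAm := hjm.apos t ht.1
              have hAp := hjp.apos t ht.1
              rw [hZmid (j+1) (by omega) (by omega) t, hZmid j (by omega) (by omega) t,
                show j + 1 - 1 = j from rfl,
                show η t (j+1) + Real.log (Afun η k (j+1) t) - Real.log (Afun η k j t)
                    - (η t j + Real.log (Afun η k j t) - Real.log (Afun η k (j-1) t))
                  = ((((η t (j+1) - η t j) + Real.log (Afun η k (j+1) t))
                    - Real.log (Afun η k j t)) - Real.log (Afun η k j t))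
                    + Real.log (Afun η k (j-1) t) by ring,
                exp_add_log _ _ hAm, exp_sub_log _ _ hAj, exp_sub_log _ _ hAj,
                exp_add_log _ _ hAp]

lemma nice_one {W : ℝ → ℕ → ℝ} (hW : ∀ i, Continuous fun t => W t i) : Nice W W 1 := by
  refine ⟨fun i => (hW i).continuousOn, fun i _ t => rfl, fun j => ?_⟩
  have hpb : PB (fun t => Real.exp (W t (j+1) - W t j)) 0 :=
    PB_exp_of_continuous ((hW (j+1)).sub (hW j))
  rcases eq_or_ne j 0 with rfl | hj
  · exact hpb.cast (by rw [pexp_eq rfl]; norm_num)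
  · exact hpb.cast (by rw [pexp_gt (by omega)])


lemma nice_PiOp {W : ℝ → ℕ → ℝ} (hW : ∀ i, Continuous fun t => W t i) :
    ∀ k, 1 ≤ k → Nice W (PiOp k W) k := by
  intro k
  induction k with
  | zero => omega
  | succ k ih =>
      intro _
      rcases Nat.eq_zero_or_pos k with rfl | hk
      · have h1 : PiOp 1 W = W := rfl
        rw [h1]
        exact nice_one hW
      · have h2 : PiOp (k+1) W = blockOp k (PiOp k W) := rfl
        rw [h2]
        exact nice_step hk (ih hk)

theorem block_SDE {W η : ℝ → ℕ → ℝ} {k : ℕ} (hk : 1 ≤ k) (hn : Nice W η k)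
    {s t : ℝ} (hs : 0 < s) (hst : s < t) :
    (blockOp k η t 0 - blockOp k η s 0 = (η t 0 - η s 0)
      + ∫ u in Ioc s t, Real.exp (blockOp k η u 1 - η u 0)) ∧
    (∀ i, 1 ≤ i → i + 1 ≤ k →
      blockOp k η t i - blockOp k η s i = (η t i - η s i)
        + ∫ u in Ioc s t, (Real.exp (blockOp k η u (i+1) - η u i)
            - Real.exp (blockOp k η u i - η u (i-1)))) ∧
    (blockOp k η t k - blockOp k η s k = (W t k - W s k)
        - ∫ u in Ioc s t, Real.exp (blockOp k η u k - η u (k-1))) := by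
  have hZtop : ∀ x, blockOp k η x k = η x k - Real.log (Afun η k (k-1) x) := by
    intro x
    rw [blockOp_apply η k hk, if_neg (lt_irrefl k), if_neg (by omega), if_pos rfl]
  have hZ0 : ∀ x, blockOp k η x 0 = η x 0 + Real.log (Afun η k 0 x) := by
    intro x
    rw [blockOp_apply η k hk, if_neg (by omega), if_pos rfl]
  have hZmid : ∀ m, 1 ≤ m → m + 1 ≤ k → ∀ x, blockOp k η x m
      = η x m + Real.log (Afun η k m x) - Real.log (Afun η k (m-1) x) := by
    intro m h1 h2 x
    rw [blockOp_apply η k hk, if_neg (by omega), if_neg (by omega), if_neg (by omega)]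
  refine ⟨?_, ?_, ?_⟩
  · -- i = 0
    have h0 := hn.ag 0 (by omega)
    have hlog := logA_diff' hk (by omega : 0 + 1 ≤ k) h0 hs hst
    rw [hZ0 t, hZ0 s]
    have : (0:ℕ) + 1 = 1 := rfl
    rw [this] at hlog
    rw [← hlog]
    ring
  · -- middle
    intro i h1 h2
    have hi := hn.ag i (by omega)
    have him := hn.ag (i-1) (by omega)
    have hlogi := logA_diff' hk (by omega : i + 1 ≤ k) hi hs hst
    have hlogim := logA_diff' hk (by omega : (i-1) + 1 ≤ k) him hs hst
    rw [show i - 1 + 1 = i by omega] at hlogim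
    have hsub : (∫ u in Ioc s t, (Real.exp (blockOp k η u (i+1) - η u i)
        - Real.exp (blockOp k η u i - η u (i-1))))
        = (∫ u in Ioc s t, Real.exp (blockOp k η u (i+1) - η u i))
          - ∫ u in Ioc s t, Real.exp (blockOp k η u i - η u (i-1)) := by
      refine integral_sub ?_ ?_
      · exact integrand_integrable' hk (by omega) hi hs
      · have := integrand_integrable' hk (by omega : (i-1)+1 ≤ k) him (t := t) hs
        rwa [show i - 1 + 1 = i by omega] at this
    rw [hZmid i h1 h2 t, hZmid i h1 h2 s, hsub, ← hlogi, ← hlogim]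
    ring
  · -- top
    have hkm := hn.ag (k-1) (by omega)
    have hlog := logA_diff' hk (by omega : (k-1) + 1 ≤ k) hkm hs hst
    rw [show k - 1 + 1 = k by omega] at hlog
    rw [hZtop t, hZtop s, ← hlog, hn.eqW k le_rfl t, hn.eqW k le_rfl s]
    ring


end OC

/-- Driven by an `N`-dimensional standard Brownian motion `W`, the triangular array
`Z_{k,i} = (Π_k W)_i` solves (in integrated, pathwise form) the coupled system
`dZ_{1,1} = dW_1`, and for `2 ≤ k ≤ N`:
`dZ_{k,1} = dZ_{k-1,1} + e^{Z_{k,2}-Z_{k-1,1}} dt`,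
`dZ_{k,i} = dZ_{k-1,i} + (e^{Z_{k,i+1}-Z_{k-1,i}} - e^{Z_{k,i}-Z_{k-1,i-1}}) dt` for `1 < i < k`,
`dZ_{k,k} = dW_k - e^{Z_{k,k}-Z_{k-1,k-1}} dt`. -/
theorem Ztri_solves_SDE {Ω : Type*} [MeasureSpace Ω] [IsProbabilityMeasure (ℙ : Measure Ω)]
    (N : ℕ) (hN : 1 ≤ N) (B : ℕ → ℝ → Ω → ℝ) (hB : IsBMFamily B) :
    ∀ᵐ ω ∂(ℙ : Measure Ω), ∀ s t : ℝ, 0 < s → s < t →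
      (Ztri (fun u i => B i u ω) 1 0 t - Ztri (fun u i => B i u ω) 1 0 s
          = B 0 t ω - B 0 s ω) ∧
      ∀ k : ℕ, 2 ≤ k → k ≤ N →
        (Ztri (fun u i => B i u ω) k 0 t - Ztri (fun u i => B i u ω) k 0 s
            = (Ztri (fun u i => B i u ω) (k - 1) 0 t - Ztri (fun u i => B i u ω) (k - 1) 0 s)
              + ∫ u in Set.Ioc s t,
                  Real.exp (Ztri (fun u' i => B i u' ω) k 1 u
                    - Ztri (fun u' i => B i u' ω) (k - 1) 0 u)) ∧
        (∀ i : ℕ, 1 ≤ i → i + 1 ≤ k - 1 →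
          Ztri (fun u i' => B i' u ω) k i t - Ztri (fun u i' => B i' u ω) k i s
            = (Ztri (fun u i' => B i' u ω) (k - 1) i t
                - Ztri (fun u i' => B i' u ω) (k - 1) i s)
              + ∫ u in Set.Ioc s t,
                  (Real.exp (Ztri (fun u' i' => B i' u' ω) k (i + 1) u
                      - Ztri (fun u' i' => B i' u' ω) (k - 1) i u)
                    - Real.exp (Ztri (fun u' i' => B i' u' ω) k i u
                      - Ztri (fun u' i' => B i' u' ω) (k - 1) (i - 1) u))) ∧
        (Ztri (fun u i => B i u ω) k (k - 1) t - Ztri (fun u i => B i u ω) k (k - 1) s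
            = (B (k - 1) t ω - B (k - 1) s ω)
              - ∫ u in Set.Ioc s t,
                  Real.exp (Ztri (fun u' i => B i u' ω) k (k - 1) u
                    - Ztri (fun u' i => B i u' ω) (k - 1) (k - 2) u)) := by
  
  have hW : ∀ ω : Ω, ∀ i, Continuous fun t => B i t ω := fun ω i => ((hB.1 i).2.1) ω
  refine Filter.Eventually.of_forall (fun ω => ?_)
  intro s t hs hst
  set W : ℝ → ℕ → ℝ := fun u i => B i u ω with hWdef
  have hz1 : ∀ x : ℝ, Ztri W 1 0 x = W x 0 := by
    intro x
    show PiOp 1 W x 0 = W x 0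
    show blockOp 0 (PiOp 0 W) x 0 = W x 0
    unfold blockOp
    rw [List.range_zero]
    rfl
  constructor
  · rw [hz1, hz1]
  · intro k hk2 hkN
    obtain ⟨κ, rfl⟩ : ∃ κ, k = κ + 1 := ⟨k - 1, by omega⟩
    have hκ : 1 ≤ κ := by omega
    have hn := OC.nice_PiOp (hW ω) κ hκ
    have hb := OC.block_SDE hκ hn hs hst
    have hZ : ∀ (i : ℕ) (x : ℝ), Ztri W (κ+1) i x = blockOp κ (PiOp κ W) x i :=
      fun i x => rfl
    have hη : ∀ (i : ℕ) (x : ℝ), Ztri W κ i x = PiOp κ W x i := fun i x => rfl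
    have hm1 : κ + 1 - 1 = κ := rfl
    refine ⟨?_, ?_, ?_⟩
    · rw [hm1]
      simp only [hZ, hη]
      exact hb.1
    · intro i h1 h2
      rw [hm1] at h2 ⊢
      simp only [hZ, hη]
      exact hb.2.1 i h1 h2
    · rw [hm1, show κ + 1 - 2 = κ - 1 by omega]
      simp only [hZ, hη]
      exact hb.2.2
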